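/- arXiv:2605.01747 — 4 statements merged into one kernel-verified Lean document; each statement's English description precedes it below -/
import Mathlib

section
/- For every nonnegative integer n and elements q, z, the sum over j from 0 to n of [n choose j]_q * (-1)^j * q^(C(j,2)) * z^j equals the product (z;q)_n = prod_{i=0}^{n-1} (1 - z q^i). (Terminating q-binomial theorem.) -/
/-- Gaussian binomial coefficient `[n choose r]_q`, defined via the q-Pascal
recurrence, with the convention that it is `0` when `r < 0` or `r > n`. -/
def qbinom {K : Type*} [CommRing K] (q : K) : ℕ → ℤ → K
  | 0, r => if r = 0 then 1 else 0
  | n + 1, r => q ^ r.toNat * qbinom q n r + qbinom q n (r - 1)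

lemma qbinom_neg {K : Type*} [CommRing K] (q : K) :
    ∀ (n : ℕ) (r : ℤ), r < 0 → qbinom q n r = 0
  | 0, r, h => by simp only [qbinom, if_neg (by omega : r ≠ 0)]
  | n + 1, r, h => by
      simp [qbinom, qbinom_neg q n r h, qbinom_neg q n (r - 1) (by omega)]

lemma qbinom_gt {K : Type*} [CommRing K] (q : K) :
    ∀ (n : ℕ) (r : ℤ), (n : ℤ) < r → qbinom q n r = 0
  | 0, r, h => by simp only [qbinom, if_neg (by omega : r ≠ 0)]
  | n + 1, r, h => by
      simp [qbinom, qbinom_gt q n r (by push_cast at h ⊢; omega),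
        qbinom_gt q n (r - 1) (by push_cast at h ⊢; omega)]

/-- Terminating q-binomial theorem. -/
theorem stmt_1 {K : Type*} [CommRing K] (q z : K) (n : ℕ) :
    ∑ j ∈ Finset.range (n + 1),
      qbinom q n j * (-1 : K) ^ j * q ^ (j.choose 2) * z ^ j =
      ∏ i ∈ Finset.range n, (1 - z * q ^ i) := by
  induction n generalizing z with
  | zero => simp [qbinom]
  | succ n ih =>
    have expand :
        ∑ j ∈ Finset.range (n + 1 + 1),
            qbinom q (n + 1) j * (-1 : K) ^ j * q ^ (j.choose 2) * z ^ j
          = (∑ j ∈ Finset.range (n + 1 + 1),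
              qbinom q n j * (-1 : K) ^ j * q ^ (j.choose 2) * (z * q) ^ j)
            + ∑ j ∈ Finset.range (n + 1 + 1),
              qbinom q n ((j : ℤ) - 1) * (-1 : K) ^ j * q ^ (j.choose 2) * z ^ j := by
      rw [← Finset.sum_add_distrib]
      refine Finset.sum_congr rfl fun j _ => ?_
      simp only [qbinom, Int.toNat_natCast, mul_pow]
      ring
    have first :
        ∑ j ∈ Finset.range (n + 1 + 1),
            qbinom q n j * (-1 : K) ^ j * q ^ (j.choose 2) * (z * q) ^ j
          = ∏ i ∈ Finset.range n, (1 - z * q * q ^ i) := by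
      have hz : qbinom q n (((n + 1 : ℕ) : ℤ)) = 0 :=
        qbinom_gt q n _ (by push_cast; omega)
      rw [Finset.sum_range_succ, hz]
      simpa using ih (z * q)
    have second :
        ∑ j ∈ Finset.range (n + 1 + 1),
            qbinom q n ((j : ℤ) - 1) * (-1 : K) ^ j * q ^ (j.choose 2) * z ^ j
          = -z * ∏ i ∈ Finset.range n, (1 - z * q * q ^ i) := by
      rw [Finset.sum_range_succ']
      have h0 : qbinom q n ((0 : ℕ) - 1 : ℤ) = 0 := qbinom_neg q n _ (by norm_num)
      rw [h0]
      have step : ∀ j ∈ Finset.range (n + 1),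
          qbinom q n (((j + 1 : ℕ) : ℤ) - 1) * (-1 : K) ^ (j + 1) *
              q ^ ((j + 1).choose 2) * z ^ (j + 1)
            = -z * (qbinom q n j * (-1 : K) ^ j * q ^ (j.choose 2) * (z * q) ^ j) := by
        intro j _
        have hc : (j + 1).choose 2 = j + j.choose 2 := by
          rw [Nat.choose_succ_succ]
          simp [Nat.choose_one_right]
        have hz : (((j + 1 : ℕ) : ℤ) - 1) = (j : ℤ) := by push_cast; ring
        rw [hz, hc, pow_add, pow_succ, pow_succ, mul_pow]
        ring
      rw [Finset.sum_congr rfl step, ← Finset.mul_sum, ih (z * q)]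
      ring
    rw [expand, first, second, Finset.prod_range_succ']
    have : ∀ i ∈ Finset.range n, (1 - z * q ^ (i + 1)) = (1 - z * q * q ^ i) := by
      intro i _; rw [pow_succ]; ring
    rw [Finset.prod_congr rfl this]
    ring
end

section
/- Define S_1(n) = sum over all integers k of q^{3k^2 - k - 3kn} * [n choose 3k-n]_q and S_3(n) = sum over all integers k of q^{3k^2 - k - 3kn} * [n choose 3k-1-n]_q, with the convention that [n choose r]_q = 0 if r < 0 or r > n. Then S_1(n) - S_3(n) = (-1)^n * q^{-C(n+1,2)} for every nonnegative integer n. -/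
section Aux

variable {K : Type*} [Field K] {q : K}

lemma qbinom_zero_of_neg (q : K) : ∀ (n : ℕ) (r : ℤ), r < 0 → qbinom q n r = 0
  | 0, r, hr => by simp [qbinom, hr.ne]
  | n + 1, r, hr => by
    rw [qbinom, qbinom_zero_of_neg q n r hr, qbinom_zero_of_neg q n (r - 1) (by omega)]
    ring

lemma qbinom_zero_of_gt (q : K) : ∀ (n : ℕ) (r : ℤ), (n : ℤ) < r → qbinom q n r = 0
  | 0, r, hr => by simp at hr; simp [qbinom, hr.ne']
  | n + 1, r, hr => by
    rw [qbinom, qbinom_zero_of_gt q n r (by push_cast at hr ⊢; omega),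
      qbinom_zero_of_gt q n (r - 1) (by push_cast at hr ⊢; omega)]
    ring

lemma pascal1 (hq : q ≠ 0) (n : ℕ) (r : ℤ) :
    qbinom q (n + 1) r = q ^ r * qbinom q n r + qbinom q n (r - 1) := by
  rcases le_or_gt 0 r with h | h
  · rw [qbinom]
    congr 1
    rw [← zpow_natCast q r.toNat, Int.toNat_of_nonneg h]
  · rw [qbinom, qbinom_zero_of_neg q n r h]
    ring

lemma pascal2 (hq : q ≠ 0) : ∀ (n : ℕ) (r : ℤ),
    qbinom q (n + 1) r = qbinom q n r + q ^ ((n : ℤ) + 1 - r) * qbinom q n (r - 1)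
  | 0, r => by
    by_cases h0 : r = 0
    · subst h0; simp [qbinom]
    · by_cases h1 : r = 1
      · subst h1; simp [qbinom]
      · rw [qbinom]
        simp [qbinom, h0, h1, sub_eq_zero, show r - 1 ≠ 0 by omega]
  | n + 1, r => by
    have a := pascal1 hq (n + 1) r
    have b := pascal2 hq n r
    have c := pascal1 hq n (r - 1)
    have d := pascal1 hq n r
    have e := pascal2 hq n (r - 1)
    have h1 : q ^ r * q ^ ((n : ℤ) + 1 - r) = q ^ ((n : ℤ) + 1) := by
      rw [← zpow_add₀ hq]; congr 1; ring
    have h2 : q ^ ((n : ℤ) + 1 + 1 - r) * q ^ (r - 1) = q ^ ((n : ℤ) + 1) := by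
      rw [← zpow_add₀ hq]; congr 1; ring
    have hσ : q ^ ((n : ℤ) + 1 - (r - 1)) = q ^ ((n : ℤ) + 1 + 1 - r) := by
      congr 1; ring
    push_cast at a b c d e ⊢
    linear_combination a + q ^ r * b - d + e - q ^ ((n : ℤ) + 1 + 1 - r) * c +
      qbinom q n (r - 1) * h1 - qbinom q n (r - 1) * h2 + qbinom q n (r - 1 - 1) * hσ

lemma qsupp {m : ℕ} {F : ℤ → K} (c : ℤ)
    (hF : ∀ k, ∃ a, F k = a * qbinom q m (3 * k + c)) :
    (Function.support F).Finite := by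
  apply Set.Finite.subset (Set.finite_Icc (-(c.natAbs + m + 1) : ℤ) (c.natAbs + m + 1))
  intro k hk
  obtain ⟨a, ha⟩ := hF k
  have hk' : F k ≠ 0 := hk
  have h1 : ¬ (3 * k + c < 0) := fun h => hk' (by rw [ha, qbinom_zero_of_neg q m _ h, mul_zero])
  have h2 : ¬ ((m : ℤ) < 3 * k + c) := fun h => hk' (by rw [ha, qbinom_zero_of_gt q m _ h, mul_zero])
  simp only [Set.mem_Icc]
  omega

end Aux

theorem stmt_3 {K : Type*} [Field K] (q : K) (hq : q ≠ 0) (n : ℕ) :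
    (∑ᶠ k : ℤ, q ^ (3 * k ^ 2 - k - 3 * k * n) * qbinom q n (3 * k - n)) -
      (∑ᶠ k : ℤ, q ^ (3 * k ^ 2 - k - 3 * k * n) * qbinom q n (3 * k - 1 - n)) =
      (-1 : K) ^ n * q ^ (-((n + 1).choose 2 : ℤ)) := by
  induction n with
  | zero =>
    have h1 : (∑ᶠ k : ℤ, q ^ (3 * k ^ 2 - k - 3 * k * (0:ℕ)) * qbinom q 0 (3 * k - (0:ℕ))) = 1 := by
      rw [finsum_eq_single _ (0 : ℤ)]
      · norm_num [qbinom]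
      · intro k hk
        have : (3 * k - ((0:ℕ):ℤ)) ≠ 0 := by simp; omega
        simp only [qbinom, this, if_false, mul_zero]
    have h2 : (∑ᶠ k : ℤ, q ^ (3 * k ^ 2 - k - 3 * k * (0:ℕ)) * qbinom q 0 (3 * k - 1 - (0:ℕ))) = 0 := by
      apply finsum_eq_zero_of_forall_eq_zero
      intro k
      have : (3 * k - 1 - ((0:ℕ):ℤ)) ≠ 0 := by simp; omega
      simp only [qbinom, this, if_false, mul_zero]
    rw [h1, h2]
    norm_num
  | succ m ih =>
    have hg0 : (Function.support fun k : ℤ =>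
        q ^ (3 * k ^ 2 - k - 3 * k * (m:ℤ)) * qbinom q m (3 * k - ↑m)).Finite :=
      qsupp (-(m:ℤ)) fun k => ⟨q ^ (3 * k ^ 2 - k - 3 * k * (m:ℤ)),
        by rw [show (3 * k + -(m:ℤ)) = 3 * k - ↑m from by ring]⟩
    have hg1 : (Function.support fun k : ℤ =>
        q ^ (3 * k ^ 2 - k - 3 * k * (m:ℤ)) * qbinom q m (3 * k - 1 - ↑m)).Finite :=
      qsupp (-1 - (m:ℤ)) fun k => ⟨q ^ (3 * k ^ 2 - k - 3 * k * (m:ℤ)),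
        by rw [show (3 * k + (-1 - (m:ℤ))) = 3 * k - 1 - ↑m from by ring]⟩
    have hr : (Function.support fun k : ℤ =>
        q ^ (3 * k ^ 2 - 4 * k - 3 * k * (m:ℤ)) * qbinom q m (3 * k - 2 - ↑m)).Finite :=
      qsupp (-2 - (m:ℤ)) fun k => ⟨q ^ (3 * k ^ 2 - 4 * k - 3 * k * (m:ℤ)),
        by rw [show (3 * k + (-2 - (m:ℤ))) = 3 * k - 2 - ↑m from by ring]⟩
    have hcg1 : (Function.support fun k : ℤ => q ^ (-((m:ℤ) + 1)) *
        (q ^ (3 * k ^ 2 - k - 3 * k * (m:ℤ)) * qbinom q m (3 * k - 1 - ↑m))).Finite :=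
      qsupp (-1 - (m:ℤ)) fun k => ⟨q ^ (-((m:ℤ) + 1)) * q ^ (3 * k ^ 2 - k - 3 * k * (m:ℤ)),
        by rw [show (3 * k + (-1 - (m:ℤ))) = 3 * k - 1 - ↑m from by ring]; ring⟩
    have hcg0s : (Function.support fun k : ℤ => q ^ (-((m:ℤ) + 1)) *
        (q ^ (3 * (k-1) ^ 2 - (k-1) - 3 * (k-1) * (m:ℤ)) * qbinom q m (3 * (k-1) - ↑m))).Finite :=
      qsupp (-3 - (m:ℤ)) fun k =>
        ⟨q ^ (-((m:ℤ) + 1)) * q ^ (3 * (k-1) ^ 2 - (k-1) - 3 * (k-1) * (m:ℤ)),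
        by rw [show (3 * k + (-3 - (m:ℤ))) = 3 * (k-1) - ↑m from by ring]; ring⟩
    have termwise1 : ∀ k : ℤ,
        q ^ (3 * k ^ 2 - k - 3 * k * ((m+1 : ℕ) : ℤ)) * qbinom q (m + 1) (3 * k - ((m+1 : ℕ) : ℤ)) =
        q ^ (-((m:ℤ) + 1)) * (q ^ (3 * k ^ 2 - k - 3 * k * (m:ℤ)) * qbinom q m (3 * k - 1 - ↑m)) +
        q ^ (3 * k ^ 2 - 4 * k - 3 * k * (m:ℤ)) * qbinom q m (3 * k - 2 - ↑m) := by
      intro k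
      rw [pascal1 hq m (3 * k - ((m+1 : ℕ) : ℤ))]
      rw [show (3 * k - ((m+1 : ℕ) : ℤ)) = 3 * k - 1 - (m:ℤ) from by push_cast; ring]
      rw [show (3 * k - 1 - (m:ℤ) - 1) = 3 * k - 2 - (m:ℤ) from by ring]
      have h1 : q ^ (3 * k ^ 2 - k - 3 * k * ((m+1 : ℕ) : ℤ)) * q ^ (3 * k - 1 - (m:ℤ)) =
          q ^ (-((m:ℤ) + 1)) * q ^ (3 * k ^ 2 - k - 3 * k * (m:ℤ)) := by
        rw [← zpow_add₀ hq, ← zpow_add₀ hq]; congr 1; push_cast; ring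
      have h2 : q ^ (3 * k ^ 2 - k - 3 * k * ((m+1 : ℕ) : ℤ)) =
          q ^ (3 * k ^ 2 - 4 * k - 3 * k * (m:ℤ)) := by congr 1; push_cast; ring
      linear_combination qbinom q m (3 * k - 1 - (m:ℤ)) * h1 + qbinom q m (3 * k - 2 - (m:ℤ)) * h2
    have termwise2 : ∀ k : ℤ,
        q ^ (3 * k ^ 2 - k - 3 * k * ((m+1 : ℕ) : ℤ)) * qbinom q (m + 1) (3 * k - 1 - ((m+1 : ℕ) : ℤ)) =
        q ^ (3 * k ^ 2 - 4 * k - 3 * k * (m:ℤ)) * qbinom q m (3 * k - 2 - ↑m) +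
        q ^ (-((m:ℤ) + 1)) *
          (q ^ (3 * (k-1) ^ 2 - (k-1) - 3 * (k-1) * (m:ℤ)) * qbinom q m (3 * (k-1) - ↑m)) := by
      intro k
      rw [pascal2 hq m (3 * k - 1 - ((m+1 : ℕ) : ℤ))]
      rw [show (3 * k - 1 - ((m+1 : ℕ) : ℤ)) = 3 * k - 2 - (m:ℤ) from by push_cast; ring]
      rw [show (3 * k - 2 - (m:ℤ) - 1) = 3 * (k - 1) - (m:ℤ) from by ring]
      have h2 : q ^ (3 * k ^ 2 - k - 3 * k * ((m+1 : ℕ) : ℤ)) =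
          q ^ (3 * k ^ 2 - 4 * k - 3 * k * (m:ℤ)) := by congr 1; push_cast; ring
      have h1 : q ^ (3 * k ^ 2 - k - 3 * k * ((m+1 : ℕ) : ℤ)) *
          q ^ ((m:ℤ) + 1 - (3 * k - 2 - (m:ℤ))) =
          q ^ (-((m:ℤ) + 1)) * q ^ (3 * (k-1) ^ 2 - (k-1) - 3 * (k-1) * (m:ℤ)) := by
        rw [← zpow_add₀ hq, ← zpow_add₀ hq]; congr 1; push_cast; ring
      linear_combination qbinom q m (3 * k - 2 - (m:ℤ)) * h2 +
        qbinom q m (3 * (k - 1) - (m:ℤ)) * h1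
    have hA : (∑ᶠ k : ℤ, q ^ (3 * k ^ 2 - k - 3 * k * ((m+1 : ℕ) : ℤ)) *
          qbinom q (m + 1) (3 * k - ((m+1 : ℕ) : ℤ))) =
        q ^ (-((m:ℤ) + 1)) *
          (∑ᶠ k : ℤ, q ^ (3 * k ^ 2 - k - 3 * k * (m:ℤ)) * qbinom q m (3 * k - 1 - ↑m)) +
        ∑ᶠ k : ℤ, q ^ (3 * k ^ 2 - 4 * k - 3 * k * (m:ℤ)) * qbinom q m (3 * k - 2 - ↑m) := by
      calc (∑ᶠ k : ℤ, q ^ (3 * k ^ 2 - k - 3 * k * ((m+1 : ℕ) : ℤ)) *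
              qbinom q (m + 1) (3 * k - ((m+1 : ℕ) : ℤ)))
          = ∑ᶠ k : ℤ, (q ^ (-((m:ℤ) + 1)) *
              (q ^ (3 * k ^ 2 - k - 3 * k * (m:ℤ)) * qbinom q m (3 * k - 1 - ↑m)) +
              q ^ (3 * k ^ 2 - 4 * k - 3 * k * (m:ℤ)) * qbinom q m (3 * k - 2 - ↑m)) :=
            finsum_congr termwise1
        _ = (∑ᶠ k : ℤ, q ^ (-((m:ℤ) + 1)) *
              (q ^ (3 * k ^ 2 - k - 3 * k * (m:ℤ)) * qbinom q m (3 * k - 1 - ↑m))) +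
            ∑ᶠ k : ℤ, q ^ (3 * k ^ 2 - 4 * k - 3 * k * (m:ℤ)) * qbinom q m (3 * k - 2 - ↑m) :=
            finsum_add_distrib hcg1 hr
        _ = _ := by rw [mul_finsum _ _]
    have hre : (∑ᶠ k : ℤ, q ^ (-((m:ℤ) + 1)) *
          (q ^ (3 * (k-1) ^ 2 - (k-1) - 3 * (k-1) * (m:ℤ)) * qbinom q m (3 * (k-1) - ↑m))) =
        ∑ᶠ k : ℤ, q ^ (-((m:ℤ) + 1)) *
          (q ^ (3 * k ^ 2 - k - 3 * k * (m:ℤ)) * qbinom q m (3 * k - ↑m)) := by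
      have h := finsum_comp_equiv (Equiv.subRight (1:ℤ)) (f := fun k : ℤ => q ^ (-((m:ℤ) + 1)) *
        (q ^ (3 * k ^ 2 - k - 3 * k * (m:ℤ)) * qbinom q m (3 * k - ↑m)))
      simp only [Equiv.subRight_apply] at h
      exact h
    have hB : (∑ᶠ k : ℤ, q ^ (3 * k ^ 2 - k - 3 * k * ((m+1 : ℕ) : ℤ)) *
          qbinom q (m + 1) (3 * k - 1 - ((m+1 : ℕ) : ℤ))) =
        (∑ᶠ k : ℤ, q ^ (3 * k ^ 2 - 4 * k - 3 * k * (m:ℤ)) * qbinom q m (3 * k - 2 - ↑m)) +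
        q ^ (-((m:ℤ) + 1)) *
          (∑ᶠ k : ℤ, q ^ (3 * k ^ 2 - k - 3 * k * (m:ℤ)) * qbinom q m (3 * k - ↑m)) := by
      calc (∑ᶠ k : ℤ, q ^ (3 * k ^ 2 - k - 3 * k * ((m+1 : ℕ) : ℤ)) *
              qbinom q (m + 1) (3 * k - 1 - ((m+1 : ℕ) : ℤ)))
          = ∑ᶠ k : ℤ, (q ^ (3 * k ^ 2 - 4 * k - 3 * k * (m:ℤ)) * qbinom q m (3 * k - 2 - ↑m) +
              q ^ (-((m:ℤ) + 1)) *
              (q ^ (3 * (k-1) ^ 2 - (k-1) - 3 * (k-1) * (m:ℤ)) * qbinom q m (3 * (k-1) - ↑m))) :=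
            finsum_congr termwise2
        _ = (∑ᶠ k : ℤ, q ^ (3 * k ^ 2 - 4 * k - 3 * k * (m:ℤ)) * qbinom q m (3 * k - 2 - ↑m)) +
            ∑ᶠ k : ℤ, q ^ (-((m:ℤ) + 1)) *
              (q ^ (3 * (k-1) ^ 2 - (k-1) - 3 * (k-1) * (m:ℤ)) * qbinom q m (3 * (k-1) - ↑m)) :=
            finsum_add_distrib hr hcg0s
        _ = _ := by rw [hre, mul_finsum _ _]
    rw [hA, hB]
    have hch : (-(((m + 1) + 1).choose 2 : ℤ)) = (-((m:ℤ) + 1)) + (-(((m + 1).choose 2 : ℤ))) := by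
      rw [Nat.choose_succ_succ, Nat.choose_one_right]; push_cast; ring
    rw [hch, zpow_add₀ hq, pow_succ]
    linear_combination (-(q ^ (-((m:ℤ) + 1)))) * ih
end

section
/- Let omega satisfy omega^2 + omega + 1 = 0 in a field of characteristic zero containing q (with q transcendental or generic), and define g(j1,j2,j3) = 2*j2 + j3 if j2 + 2*j3 ≡ 2 (mod 3) and g(j1,j2,j3) = j2 + 2*j3 otherwise. Then for every positive integer m, the sum over triples (j1,j2,j3) of nonnegative integers with j1+j2+j3 = 3m of q^{(1/3)(C(j1,2)+C(j2,2)+C(j3,2) - g(j1,j2,j3))} * [3m choose j1,j2,j3]_q * omega^{j2+2*j3} equals 0; and for m = 0 the sum equals 1. -/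
/-- The q-shifted factorial `(a;q)_k = ∏_{i=0}^{k-1} (1 - a qⁱ)`. -/
def qPoch {K : Type*} [CommRing K] (q a : K) (k : ℕ) : K :=
  ∏ i ∈ Finset.range k, (1 - a * q ^ i)

/-- The q-multinomial coefficient `[n choose j1, j2, j3]_q` (for `j1+j2+j3 = n`),
defined as `(q;q)_n / ((q;q)_{j1} (q;q)_{j2} (q;q)_{j3})`. -/
noncomputable def qmul3 {K : Type*} [Field K] (q : K) (n j1 j2 j3 : ℕ) : K :=
  qPoch q q n / (qPoch q q j1 * qPoch q q j2 * qPoch q q j3)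

namespace Stmt7Aux

open Polynomial Finset

variable {K : Type*} [Field K] [CharZero K]

/-! ### K-side basic facts -/

lemma q_ne_zero {q : K} (hq : Transcendental ℚ q) : q ≠ 0 := by
  intro h
  exact hq (h ▸ isAlgebraic_zero)

lemma q_pow_ne_one {q : K} (hq : Transcendental ℚ q) {k : ℕ} (hk : k ≠ 0) : q ^ k ≠ 1 := by
  intro h
  apply hq
  refine ⟨X ^ k - C 1, ?_, ?_⟩
  · exact X_pow_sub_C_ne_zero (Nat.pos_of_ne_zero hk) 1
  · simp [h]

lemma qPoch_ne_zero {q : K} (hq : Transcendental ℚ q) (n : ℕ) : qPoch q q n ≠ 0 := by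
  unfold qPoch
  refine Finset.prod_ne_zero_iff.mpr fun i _ => ?_
  intro h
  have h2 : q ^ (i + 1) = 1 := by
    have h1 : q * q ^ i = 1 := (sub_eq_zero.mp h).symm
    rw [pow_succ, mul_comm]
    exact h1
  exact q_pow_ne_one hq (Nat.succ_ne_zero i) h2

lemma qPoch_succ (q : K) (n : ℕ) : qPoch q q (n + 1) = qPoch q q n * (1 - q ^ (n + 1)) := by
  unfold qPoch
  rw [Finset.prod_range_succ, pow_succ, mul_comm (q ^ n) q]

lemma one_sub_q_pow_ne_zero {q : K} (hq : Transcendental ℚ q) {k : ℕ} (hk : k ≠ 0) :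
    (1 : K) - q ^ k ≠ 0 := by
  intro h
  exact q_pow_ne_one hq hk (sub_eq_zero.mp h).symm

/-- multinomial with n determined by the parts -/
noncomputable def m3 (q : K) (j1 j2 j3 : ℕ) : K := qmul3 q (j1 + j2 + j3) j1 j2 j3

lemma m3_swap23 (q : K) (j1 j2 j3 : ℕ) : m3 q j1 j3 j2 = m3 q j1 j2 j3 := by
  unfold m3 qmul3
  have h : j1 + j3 + j2 = j1 + j2 + j3 := by omega
  rw [h]
  ring

lemma m3_rot (q : K) (j1 j2 j3 : ℕ) : m3 q j2 j3 j1 = m3 q j1 j2 j3 := by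
  unfold m3 qmul3
  have h : j2 + j3 + j1 = j1 + j2 + j3 := by omega
  rw [h]
  ring

lemma m3_step1 {q : K} (hq : Transcendental ℚ q) (k j2 j3 : ℕ) :
    (1 - q ^ (k + 1)) * m3 q (k + 1) j2 j3 = (1 - q ^ (k + 1 + j2 + j3)) * m3 q k j2 j3 := by
  unfold m3 qmul3
  have e1 : k + 1 + j2 + j3 = (k + j2 + j3) + 1 := by omega
  rw [e1, qPoch_succ, qPoch_succ]
  have h1 := qPoch_ne_zero hq (k + j2 + j3)
  have h2 := qPoch_ne_zero hq k
  have h3 := qPoch_ne_zero hq j2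
  have h4 := qPoch_ne_zero hq j3
  have h5 : (1:K) - q ^ (k + 1) ≠ 0 := one_sub_q_pow_ne_zero hq (by omega)
  field_simp

lemma m3_step2 {q : K} (hq : Transcendental ℚ q) (j1 k j3 : ℕ) :
    (1 - q ^ (k + 1)) * m3 q j1 (k + 1) j3 = (1 - q ^ (j1 + (k + 1) + j3)) * m3 q j1 k j3 := by
  have h := m3_step1 hq k j1 j3
  have e2 : m3 q (k+1) j1 j3 = m3 q j1 (k+1) j3 := by
    rw [← m3_rot q j1 (k+1) j3, m3_swap23]
  have e3 : m3 q k j1 j3 = m3 q j1 k j3 := by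
    rw [← m3_rot q j1 k j3, m3_swap23]
  rw [e2, e3] at h
  have e4 : k + 1 + j1 + j3 = j1 + (k + 1) + j3 := by omega
  rw [e4] at h
  exact h

lemma m3_step3 {q : K} (hq : Transcendental ℚ q) (j1 j2 k : ℕ) :
    (1 - q ^ (k + 1)) * m3 q j1 j2 (k + 1) = (1 - q ^ (j1 + j2 + (k + 1))) * m3 q j1 j2 k := by
  have h := m3_step1 hq k j1 j2
  have e2 : m3 q (k+1) j1 j2 = m3 q j1 j2 (k+1) := by
    rw [← m3_rot q j1 j2 (k+1), ← m3_rot q j2 (k+1) j1]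
  have e3 : m3 q k j1 j2 = m3 q j1 j2 k := by
    rw [← m3_rot q j1 j2 k, ← m3_rot q j2 k j1]
  rw [e2, e3] at h
  have e4 : k + 1 + j1 + j2 = j1 + j2 + (k + 1) := by omega
  rw [e4] at h
  exact h

lemma m3_split {q : K} (hq : Transcendental ℚ q) {j1 j2 j3 n : ℕ} (hsum : j1 + j2 + j3 = n + 1) :
    m3 q j1 j2 j3 =
      q ^ (j2 + j3) * ((1 - q ^ j1) * ((1 - q ^ (n+1))⁻¹ * m3 q j1 j2 j3)) +
      q ^ j3 * ((1 - q ^ j2) * ((1 - q ^ (n+1))⁻¹ * m3 q j1 j2 j3)) +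
      (1 - q ^ j3) * ((1 - q ^ (n+1))⁻¹ * m3 q j1 j2 j3) := by
  have h1qn : (1:K) - q ^ (n+1) ≠ 0 := one_sub_q_pow_ne_zero hq (by omega)
  have key : q ^ (j2 + j3) * (1 - q ^ j1) + q ^ j3 * (1 - q ^ j2) + (1 - q ^ j3)
      = 1 - q ^ (n + 1) := by
    rw [← hsum]
    ring
  calc m3 q j1 j2 j3 = (1 - q^(n+1)) * ((1 - q ^ (n+1))⁻¹ * m3 q j1 j2 j3) := by
        rw [← mul_assoc, mul_inv_cancel₀ h1qn, one_mul]
    _ = (q ^ (j2 + j3) * (1 - q ^ j1) + q ^ j3 * (1 - q ^ j2) + (1 - q ^ j3)) *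
          ((1 - q ^ (n+1))⁻¹ * m3 q j1 j2 j3) := by rw [key]
    _ = _ := by ring

lemma m3_red1 {q : K} (hq : Transcendental ℚ q) {k j2 j3 n : ℕ}
    (hsum : k + 1 + j2 + j3 = n + 1) :
    (1 - q ^ (k+1)) * ((1 - q ^ (n+1))⁻¹ * m3 q (k+1) j2 j3) = m3 q k j2 j3 := by
  have h1qn : (1:K) - q ^ (n+1) ≠ 0 := one_sub_q_pow_ne_zero hq (by omega)
  rw [← mul_assoc, mul_comm (1 - q ^ (k+1)) ((1 - q ^ (n+1))⁻¹), mul_assoc,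
    m3_step1 hq, hsum, ← mul_assoc, inv_mul_cancel₀ h1qn, one_mul]

lemma m3_red2 {q : K} (hq : Transcendental ℚ q) {j1 k j3 n : ℕ}
    (hsum : j1 + (k + 1) + j3 = n + 1) :
    (1 - q ^ (k+1)) * ((1 - q ^ (n+1))⁻¹ * m3 q j1 (k+1) j3) = m3 q j1 k j3 := by
  have h1qn : (1:K) - q ^ (n+1) ≠ 0 := one_sub_q_pow_ne_zero hq (by omega)
  rw [← mul_assoc, mul_comm (1 - q ^ (k+1)) ((1 - q ^ (n+1))⁻¹), mul_assoc,
    m3_step2 hq, hsum, ← mul_assoc, inv_mul_cancel₀ h1qn, one_mul]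

lemma m3_red3 {q : K} (hq : Transcendental ℚ q) {j1 j2 k n : ℕ}
    (hsum : j1 + j2 + (k + 1) = n + 1) :
    (1 - q ^ (k+1)) * ((1 - q ^ (n+1))⁻¹ * m3 q j1 j2 (k+1)) = m3 q j1 j2 k := by
  have h1qn : (1:K) - q ^ (n+1) ≠ 0 := one_sub_q_pow_ne_zero hq (by omega)
  rw [← mul_assoc, mul_comm (1 - q ^ (k+1)) ((1 - q ^ (n+1))⁻¹), mul_assoc,
    m3_step3 hq, hsum, ← mul_assoc, inv_mul_cancel₀ h1qn, one_mul]

/-! ### The cubic extension ring -/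

variable (q : K)

abbrev Rg : Type _ := AdjoinRoot (X ^ 3 - C q)

noncomputable def φR : K →+* Rg q := algebraMap K (Rg q)

lemma rt_cube : (AdjoinRoot.root (X ^ 3 - C q)) ^ 3 = φR q q := by
  have h := AdjoinRoot.mk_self (f := (X ^ 3 - C q : K[X]))
  rw [map_sub, map_pow, AdjoinRoot.mk_X, AdjoinRoot.mk_C, sub_eq_zero] at h
  rw [h, φR, AdjoinRoot.algebraMap_eq]

lemma phiR_inj : Function.Injective (φR q) := by
  have hm : (X ^ 3 - C q : K[X]).Monic := monic_X_pow_sub_C q (by norm_num)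
  set pb := AdjoinRoot.powerBasis' hm with hpb
  have hdim : pb.dim = 3 := by
    rw [hpb, AdjoinRoot.powerBasis'_dim, natDegree_X_pow_sub_C]
  let i0 : Fin pb.dim := ⟨0, by omega⟩
  have hb1 : pb.basis i0 = 1 := by
    rw [pb.basis_eq_pow i0]
    norm_num
  rw [injective_iff_map_eq_zero]
  intro x hx
  have hsm : x • pb.basis i0 = 0 := by
    rw [hb1]
    rw [φR, Algebra.algebraMap_eq_smul_one] at hx
    exact hx
  have h1 : pb.basis.repr (x • pb.basis i0) i0 = x := by
    rw [map_smul, Module.Basis.repr_self]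
    simp
  rw [hsm] at h1
  simpa using h1.symm

variable {ω : K}

noncomputable def pu (hq0 : q ≠ 0) : (Rg q)ˣ where
  val := AdjoinRoot.root (X ^ 3 - C q)
  inv := φR q q⁻¹ * (AdjoinRoot.root (X ^ 3 - C q)) ^ 2
  val_inv := by
    have h : AdjoinRoot.root (X ^ 3 - C q) * (φR q q⁻¹ * (AdjoinRoot.root (X ^ 3 - C q)) ^ 2)
        = φR q q⁻¹ * (AdjoinRoot.root (X ^ 3 - C q)) ^ 3 := by ring
    rw [h, rt_cube, ← map_mul, inv_mul_cancel₀ hq0, map_one]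
  inv_val := by
    have h : (φR q q⁻¹ * (AdjoinRoot.root (X ^ 3 - C q)) ^ 2) * AdjoinRoot.root (X ^ 3 - C q)
        = φR q q⁻¹ * (AdjoinRoot.root (X ^ 3 - C q)) ^ 3 := by ring
    rw [h, rt_cube, ← map_mul, inv_mul_cancel₀ hq0, map_one]

noncomputable def wu (hω : ω ^ 2 + ω + 1 = 0) : (Rg q)ˣ where
  val := φR q ω
  inv := φR q (-1 - ω)
  val_inv := by
    rw [← map_mul, ← map_one (φR q)]
    congr 1
    linear_combination -hω
  inv_val := by
    rw [← map_mul, ← map_one (φR q)]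
    congr 1
    linear_combination -hω

variable (hq0 : q ≠ 0) (hω : ω ^ 2 + ω + 1 = 0)

noncomputable def zp (e : ℤ) : Rg q := ((pu q hq0 ^ e : (Rg q)ˣ) : Rg q)

noncomputable def zw (e : ℤ) : Rg q := ((wu q hω ^ e : (Rg q)ˣ) : Rg q)

lemma zp_add (e f : ℤ) : zp q hq0 (e + f) = zp q hq0 e * zp q hq0 f := by
  unfold zp
  rw [zpow_add, Units.val_mul]

lemma zw_add (e f : ℤ) : zw q hω (e + f) = zw q hω e * zw q hω f := by
  unfold zw
  rw [zpow_add, Units.val_mul]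

lemma zp_zero : zp q hq0 0 = 1 := by simp [zp]

lemma zw_zero : zw q hω 0 = 1 := by simp [zw]

lemma zw_one : zw q hω 1 = φR q ω := by
  unfold zw
  rw [zpow_one]
  rfl

lemma omega_cube (hω : ω ^ 2 + ω + 1 = 0) : ω ^ 3 = 1 := by
  linear_combination (ω - 1) * hω

lemma wu_pow_three : (wu q hω) ^ (3 : ℕ) = 1 := by
  apply Units.ext
  show (φR q ω) ^ 3 = 1
  rw [← map_pow, omega_cube hω, map_one]

lemma zw_congr {e f : ℤ} (h : (3:ℤ) ∣ (e - f)) : zw q hω e = zw q hω f := by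
  obtain ⟨s, hs⟩ := h
  have he : e = f + 3 * s := by linarith
  unfold zw
  rw [he, zpow_add, zpow_mul]
  have h3 : (wu q hω) ^ (3:ℤ) = 1 := by
    rw [show (3:ℤ) = ((3:ℕ):ℤ) from rfl, zpow_natCast, wu_pow_three]
  rw [h3, one_zpow, mul_one]

lemma zw_two : zw q hω 2 = φR q ω * φR q ω := by
  rw [show (2:ℤ) = 1 + 1 from rfl, zw_add, zw_one]

/-- the master combination lemma -/
lemma zwp_shift {E1 F1 Ec Fc E2 F2 : ℤ} (X Y : Rg q) (hX : X = Y)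
    (hE : (3:ℤ) ∣ (E1 - (Ec + E2))) (hF : F1 = Fc + F2) :
    zw q hω E1 * zp q hq0 F1 * X =
      (zw q hω Ec * zp q hq0 Fc) * (zw q hω E2 * zp q hq0 F2 * Y) := by
  subst hX
  rw [zw_congr q hω hE, hF, zw_add, zp_add]
  ring

lemma zwp_congr {E1 F1 E2 F2 : ℤ} (X Y : Rg q) (hX : X = Y)
    (hE : (3:ℤ) ∣ (E1 - E2)) (hF : F1 = F2) :
    zw q hω E1 * zp q hq0 F1 * X = zw q hω E2 * zp q hq0 F2 * Y := by
  subst hX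
  rw [zw_congr q hω hE, hF]

lemma zp_absorb (E F G : ℤ) (X : Rg q) :
    zw q hω E * zp q hq0 F * (zp q hq0 G * X) = zw q hω E * zp q hq0 (F + G) * X := by
  rw [zp_add]
  ring

lemma phi_q_pow (k : ℕ) : φR q (q ^ k) = zp q hq0 (3 * (k:ℤ)) := by
  unfold zp
  have h1 : (3 * (k:ℤ)) = ((3 * k : ℕ) : ℤ) := by push_cast; ring
  rw [h1, zpow_natCast, Units.val_pow_eq_pow_val]
  show φR q (q ^ k) = (AdjoinRoot.root (X ^ 3 - C q)) ^ (3 * k)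
  rw [map_pow, ← rt_cube, ← pow_mul]

lemma eq_unit_inv {R : Type*} [CommRing R] (U : Rˣ) (y : R) (h : (U:R) * y = 1) :
    y = ((U⁻¹ : Rˣ) : R) := by
  calc y = (((U⁻¹ : Rˣ) : R) * U) * y := by rw [Units.inv_mul, one_mul]
  _ = ((U⁻¹ : Rˣ) : R) * ((U:R) * y) := by ring
  _ = _ := by rw [h, mul_one]

lemma phi_q_zpow {e g : ℤ} (h3 : 3 * e = g) : φR q (q ^ e) = zp q hq0 g := by
  subst h3
  rcases e with k | k
  · show φR q (q ^ ((k:ℕ):ℤ)) = _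
    rw [zpow_natCast, phi_q_pow q hq0 k]
    rfl
  · rw [zpow_negSucc]
    have hne : q ^ (k+1) ≠ 0 := pow_ne_zero _ hq0
    have hA := phi_q_pow q hq0 (k+1)
    have h1 : ((pu q hq0 ^ (3 * (((k+1):ℕ):ℤ)) : (Rg q)ˣ) : Rg q) * φR q ((q ^ (k+1))⁻¹) = 1 := by
      show zp q hq0 (3 * (((k+1):ℕ):ℤ)) * φR q ((q ^ (k+1))⁻¹) = 1
      rw [← hA, ← map_mul, mul_inv_cancel₀ hne, map_one]
    have h2 := eq_unit_inv (pu q hq0 ^ (3 * (((k+1):ℕ):ℤ))) _ h1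
    rw [h2]
    unfold zp
    rw [show (3 : ℤ) * Int.negSucc k = -(3 * (((k+1):ℕ):ℤ)) from by
      rw [Int.negSucc_eq]; push_cast; ring, zpow_neg]

lemma phi_omega_pow (k : ℕ) : φR q (ω ^ k) = zw q hω (k:ℤ) := by
  unfold zw
  rw [zpow_natCast, Units.val_pow_eq_pow_val]
  show φR q (ω ^ k) = (φR q ω) ^ k
  rw [map_pow]

/-! ### index set, exponents, terms -/

def Tset (n : ℕ) : Finset (ℕ × ℕ × ℕ) :=
  (Finset.range (n + 1) ×ˢ Finset.range (n + 1) ×ˢ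
    Finset.range (n + 1)).filter (fun j => j.1 + j.2.1 + j.2.2 = n)

lemma mem_Tset {n : ℕ} {j : ℕ × ℕ × ℕ} : j ∈ Tset n ↔ j.1 + j.2.1 + j.2.2 = n := by
  unfold Tset
  simp only [Finset.mem_filter, Finset.mem_product, Finset.mem_range]
  constructor
  · exact fun h => h.2
  · intro h
    exact ⟨⟨by omega, by omega, by omega⟩, h⟩

def epc (j : ℕ × ℕ × ℕ) : ℤ :=
  (j.1.choose 2 : ℤ) + (j.2.1.choose 2 : ℤ) + (j.2.2.choose 2 : ℤ)

lemma choose_two_succ (k : ℕ) : ((k+1).choose 2 : ℤ) = (k.choose 2 : ℤ) + k := by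
  have h := Nat.choose_succ_succ k 1
  rw [Nat.choose_one_right] at h
  rw [show (2:ℕ) = 1 + 1 from rfl, h]
  push_cast
  ring

noncomputable def trm (t a b : ℤ) (j : ℕ × ℕ × ℕ) : Rg q :=
  zw q hω (t * ((j.2.1:ℤ) + 2 * (j.2.2:ℤ))) *
    zp q hq0 (epc j - a * (j.2.1:ℤ) - b * (j.2.2:ℤ)) *
    φR q (m3 q j.1 j.2.1 j.2.2)

noncomputable def Psi (t : ℤ) (n : ℕ) (a b : ℤ) : Rg q :=
  ∑ j ∈ Tset n, trm q hq0 hω t a b j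

/-! ### reindexing lemmas -/

lemma sum_rot {M : Type*} [AddCommMonoid M] (n : ℕ) (f : ℕ × ℕ × ℕ → M) :
    ∑ j ∈ Tset n, f j = ∑ j ∈ Tset n, f (j.2.1, j.2.2, j.1) := by
  refine Finset.sum_nbij' (fun j => (j.2.2, j.1, j.2.1)) (fun j => (j.2.1, j.2.2, j.1))
    ?_ ?_ ?_ ?_ ?_ <;> intro a ha
  · obtain ⟨a1, a2, a3⟩ := a
    rw [mem_Tset] at ha ⊢
    simp only at ha ⊢
    omega
  · obtain ⟨a1, a2, a3⟩ := a
    rw [mem_Tset] at ha ⊢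
    simp only at ha ⊢
    omega
  · rfl
  · rfl
  · rfl

lemma sum_swap23 {M : Type*} [AddCommMonoid M] (n : ℕ) (f : ℕ × ℕ × ℕ → M) :
    ∑ j ∈ Tset n, f j = ∑ j ∈ Tset n, f (j.1, j.2.2, j.2.1) := by
  refine Finset.sum_nbij' (fun j => (j.1, j.2.2, j.2.1)) (fun j => (j.1, j.2.2, j.2.1))
    ?_ ?_ ?_ ?_ ?_ <;> intro a ha
  · obtain ⟨a1, a2, a3⟩ := a
    rw [mem_Tset] at ha ⊢
    simp only at ha ⊢
    omega
  · obtain ⟨a1, a2, a3⟩ := a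
    rw [mem_Tset] at ha ⊢
    simp only at ha ⊢
    omega
  · rfl
  · rfl
  · rfl

lemma psi_swap (t a b : ℤ) (n : ℕ) : Psi q hq0 hω t n a b = Psi q hq0 hω (2*t) n b a := by
  unfold Psi
  rw [sum_swap23 n (trm q hq0 hω t a b)]
  refine Finset.sum_congr rfl fun j _ => ?_
  unfold trm
  simp only
  refine zwp_congr q hq0 hω _ _ (by rw [m3_swap23]) ⟨-t * (j.2.2:ℤ), by push_cast; ring⟩ ?_
  unfold epc
  simp only
  push_cast
  ring

lemma psi_rot (t a b : ℤ) (n : ℕ) :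
    Psi q hq0 hω t n a b =
      zw q hω (-(t*(n:ℤ))) * zp q hq0 (-(b*(n:ℤ))) * Psi q hq0 hω t n (-b) (a-b) := by
  unfold Psi
  rw [sum_rot n (trm q hq0 hω t a b), Finset.mul_sum]
  refine Finset.sum_congr rfl fun j hj => ?_
  obtain ⟨j1, j2, j3⟩ := j
  have hs := mem_Tset.mp hj
  simp only at hs
  have hz : (j1:ℤ) + (j2:ℤ) + (j3:ℤ) = (n:ℤ) := by omega
  unfold trm
  dsimp only
  refine zwp_shift q hq0 hω _ _ (by rw [m3_rot]) ⟨t * (j1:ℤ), by linear_combination (-t) * hz⟩ ?_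
  unfold epc
  dsimp only
  linear_combination (-b) * hz

/-! ### the Pascal recursion -/

lemma psi_rec {q : K} (hq : Transcendental ℚ q) (hq0 : q ≠ 0) (hω : ω ^ 2 + ω + 1 = 0)
    (t a b : ℤ) (n : ℕ) :
    Psi q hq0 hω t (n+1) a b =
      zp q hq0 (n:ℤ) * Psi q hq0 hω t n (a-2) (b-2) +
      zw q hω t * zp q hq0 (-a) * Psi q hq0 hω t n (a-1) (b-3) +
      zw q hω (2*t) * zp q hq0 (-b) * Psi q hq0 hω t n a (b-1) := by
  unfold Psi
  have split : ∀ j ∈ Tset (n+1), trm q hq0 hω t a b j =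
      (zw q hω (t * ((j.2.1:ℤ) + 2 * (j.2.2:ℤ))) *
        zp q hq0 (epc j - a * (j.2.1:ℤ) - b * (j.2.2:ℤ)) *
        φR q (q ^ (j.2.1 + j.2.2) * ((1 - q ^ j.1) * ((1 - q ^ (n+1))⁻¹ * m3 q j.1 j.2.1 j.2.2)))) +
      (zw q hω (t * ((j.2.1:ℤ) + 2 * (j.2.2:ℤ))) *
        zp q hq0 (epc j - a * (j.2.1:ℤ) - b * (j.2.2:ℤ)) *
        φR q (q ^ j.2.2 * ((1 - q ^ j.2.1) * ((1 - q ^ (n+1))⁻¹ * m3 q j.1 j.2.1 j.2.2)))) +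
      (zw q hω (t * ((j.2.1:ℤ) + 2 * (j.2.2:ℤ))) *
        zp q hq0 (epc j - a * (j.2.1:ℤ) - b * (j.2.2:ℤ)) *
        φR q ((1 - q ^ j.2.2) * ((1 - q ^ (n+1))⁻¹ * m3 q j.1 j.2.1 j.2.2))) := by
    intro j hj
    have hsum := mem_Tset.mp hj
    unfold trm
    rw [show φR q (m3 q j.1 j.2.1 j.2.2) =
      φR q (q ^ (j.2.1 + j.2.2) * ((1 - q ^ j.1) * ((1 - q ^ (n+1))⁻¹ * m3 q j.1 j.2.1 j.2.2))) +
      φR q (q ^ j.2.2 * ((1 - q ^ j.2.1) * ((1 - q ^ (n+1))⁻¹ * m3 q j.1 j.2.1 j.2.2))) +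
      φR q ((1 - q ^ j.2.2) * ((1 - q ^ (n+1))⁻¹ * m3 q j.1 j.2.1 j.2.2)) from by
        rw [← map_add, ← map_add]
        exact congrArg (φR q) (m3_split hq hsum)]
    ring
  rw [Finset.sum_congr rfl split, Finset.sum_add_distrib, Finset.sum_add_distrib]
  have hS1 : ∑ j ∈ Tset (n+1),
      (zw q hω (t * ((j.2.1:ℤ) + 2 * (j.2.2:ℤ))) *
        zp q hq0 (epc j - a * (j.2.1:ℤ) - b * (j.2.2:ℤ)) *
        φR q (q ^ (j.2.1 + j.2.2) * ((1 - q ^ j.1) * ((1 - q ^ (n+1))⁻¹ * m3 q j.1 j.2.1 j.2.2)))) =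
      zp q hq0 (n:ℤ) * Psi q hq0 hω t n (a-2) (b-2) := by
    unfold Psi
    rw [Finset.mul_sum]
    rw [← Finset.sum_filter_of_ne (p := fun j => j.1 ≠ 0) (fun x _ hfx => by
      by_contra h0
      apply hfx
      rw [h0]
      norm_num)]
    refine Finset.sum_nbij' (fun j => (j.1 - 1, j.2.1, j.2.2)) (fun j => (j.1 + 1, j.2.1, j.2.2))
      ?_ ?_ ?_ ?_ ?_
    · intro x hx
      simp only [Finset.mem_filter, mem_Tset] at hx ⊢
      omega
    · intro x hx
      simp only [Finset.mem_filter, mem_Tset] at hx ⊢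
      omega
    · intro x hx
      simp only [Finset.mem_filter] at hx
      obtain ⟨x1, x2, x3⟩ := x
      simp only at hx ⊢
      have h9 : x1 - 1 + 1 = x1 := by omega
      rw [h9]
    · intro x _
      obtain ⟨x1, x2, x3⟩ := x
      simp only [Nat.add_sub_cancel]
    · intro x hx
      simp only [Finset.mem_filter, mem_Tset] at hx
      obtain ⟨hmem, hne⟩ := hx
      obtain ⟨x1, x2, x3⟩ := x
      simp only at hmem hne ⊢
      obtain ⟨k, rfl⟩ : ∃ k, x1 = k + 1 := ⟨x1 - 1, by omega⟩
      simp only [Nat.add_sub_cancel]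
      have hsum' : k + 1 + x2 + x3 = n + 1 := hmem
      have hz : (k:ℤ) + (x2:ℤ) + (x3:ℤ) = (n:ℤ) := by omega
      rw [m3_red1 hq hsum', map_mul, phi_q_pow q hq0, zp_absorb]
      unfold trm
      dsimp only
      calc _ = (zw q hω 0 * zp q hq0 (n:ℤ)) *
          (zw q hω (t * ((x2:ℤ) + 2 * (x3:ℤ))) *
            zp q hq0 (epc (k, x2, x3) - (a-2) * (x2:ℤ) - (b-2) * (x3:ℤ)) *
            φR q (m3 q k x2 x3)) := by
            refine zwp_shift q hq0 hω _ _ rfl ⟨0, by ring⟩ ?_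
            unfold epc
            dsimp only
            rw [choose_two_succ]
            push_cast
            linear_combination hz
        _ = _ := by rw [zw_zero, one_mul]
  have hS2 : ∑ j ∈ Tset (n+1),
      (zw q hω (t * ((j.2.1:ℤ) + 2 * (j.2.2:ℤ))) *
        zp q hq0 (epc j - a * (j.2.1:ℤ) - b * (j.2.2:ℤ)) *
        φR q (q ^ j.2.2 * ((1 - q ^ j.2.1) * ((1 - q ^ (n+1))⁻¹ * m3 q j.1 j.2.1 j.2.2)))) =
      zw q hω t * zp q hq0 (-a) * Psi q hq0 hω t n (a-1) (b-3) := by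
    unfold Psi
    rw [Finset.mul_sum]
    rw [← Finset.sum_filter_of_ne (p := fun j => j.2.1 ≠ 0) (fun x _ hfx => by
      by_contra h0
      apply hfx
      rw [h0]
      norm_num)]
    refine Finset.sum_nbij' (fun j => (j.1, j.2.1 - 1, j.2.2)) (fun j => (j.1, j.2.1 + 1, j.2.2))
      ?_ ?_ ?_ ?_ ?_
    · intro x hx
      simp only [Finset.mem_filter, mem_Tset] at hx ⊢
      omega
    · intro x hx
      simp only [Finset.mem_filter, mem_Tset] at hx ⊢
      omega
    · intro x hx
      simp only [Finset.mem_filter] at hx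
      obtain ⟨x1, x2, x3⟩ := x
      simp only at hx ⊢
      have h9 : x2 - 1 + 1 = x2 := by omega
      rw [h9]
    · intro x _
      obtain ⟨x1, x2, x3⟩ := x
      simp only [Nat.add_sub_cancel]
    · intro x hx
      simp only [Finset.mem_filter, mem_Tset] at hx
      obtain ⟨hmem, hne⟩ := hx
      obtain ⟨x1, x2, x3⟩ := x
      simp only at hmem hne ⊢
      obtain ⟨k, rfl⟩ : ∃ k, x2 = k + 1 := ⟨x2 - 1, by omega⟩
      simp only [Nat.add_sub_cancel]
      have hsum' : x1 + (k + 1) + x3 = n + 1 := hmem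
      rw [m3_red2 hq hsum', map_mul, phi_q_pow q hq0, zp_absorb]
      unfold trm
      dsimp only
      refine zwp_shift q hq0 hω _ _ rfl ⟨0, by push_cast; ring⟩ ?_
      unfold epc
      dsimp only
      rw [choose_two_succ]
      push_cast
      ring
  have hS3 : ∑ j ∈ Tset (n+1),
      (zw q hω (t * ((j.2.1:ℤ) + 2 * (j.2.2:ℤ))) *
        zp q hq0 (epc j - a * (j.2.1:ℤ) - b * (j.2.2:ℤ)) *
        φR q ((1 - q ^ j.2.2) * ((1 - q ^ (n+1))⁻¹ * m3 q j.1 j.2.1 j.2.2))) =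
      zw q hω (2*t) * zp q hq0 (-b) * Psi q hq0 hω t n a (b-1) := by
    unfold Psi
    rw [Finset.mul_sum]
    rw [← Finset.sum_filter_of_ne (p := fun j => j.2.2 ≠ 0) (fun x _ hfx => by
      by_contra h0
      apply hfx
      rw [h0]
      norm_num)]
    refine Finset.sum_nbij' (fun j => (j.1, j.2.1, j.2.2 - 1)) (fun j => (j.1, j.2.1, j.2.2 + 1))
      ?_ ?_ ?_ ?_ ?_
    · intro x hx
      simp only [Finset.mem_filter, mem_Tset] at hx ⊢
      omega
    · intro x hx
      simp only [Finset.mem_filter, mem_Tset] at hx ⊢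
      omega
    · intro x hx
      simp only [Finset.mem_filter] at hx
      obtain ⟨x1, x2, x3⟩ := x
      simp only at hx ⊢
      have h9 : x3 - 1 + 1 = x3 := by omega
      rw [h9]
    · intro x _
      obtain ⟨x1, x2, x3⟩ := x
      simp only [Nat.add_sub_cancel]
    · intro x hx
      simp only [Finset.mem_filter, mem_Tset] at hx
      obtain ⟨hmem, hne⟩ := hx
      obtain ⟨x1, x2, x3⟩ := x
      simp only at hmem hne ⊢
      obtain ⟨k, rfl⟩ : ∃ k, x3 = k + 1 := ⟨x3 - 1, by omega⟩
      simp only [Nat.add_sub_cancel]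
      have hsum' : x1 + x2 + (k + 1) = n + 1 := hmem
      rw [m3_red3 hq hsum']
      unfold trm
      dsimp only
      refine zwp_shift q hq0 hω _ _ rfl ⟨0, by push_cast; ring⟩ ?_
      unfold epc
      dsimp only
      rw [choose_two_succ]
      push_cast
      ring
  rw [hS1, hS2, hS3]
  rfl

/-! ### the bridge -/

def Br (n : ℕ) (a b : ℤ) : Prop :=
  Psi q hq0 hω 2 n a b = zw q hω (a - b) * Psi q hq0 hω 1 n a b

lemma Br_diag (n : ℕ) (a : ℤ) : Br q hq0 hω n a a := by
  unfold Br
  rw [show a - a = 0 from by ring, zw_zero, one_mul]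
  have h := psi_swap q hq0 hω 1 a a n
  rw [show (2 * 1 : ℤ) = 2 from by ring] at h
  exact h.symm

lemma Br_rot {n : ℕ} {a b : ℤ} (h3 : (3:ℤ) ∣ ((n:ℤ) - a - b)) (h : Br q hq0 hω n a b) :
    Br q hq0 hω n (-b) (a - b) := by
  unfold Br at h ⊢
  rw [psi_rot q hq0 hω 2 a b n, psi_rot q hq0 hω 1 a b n] at h
  have hcoef : zw q hω (a - b) * (zw q hω (-(1*(n:ℤ))) * zp q hq0 (-(b*(n:ℤ))) *
      Psi q hq0 hω 1 n (-b) (a-b)) =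
      zw q hω (-(2*(n:ℤ))) * zp q hq0 (-(b*(n:ℤ))) *
        (zw q hω (-b - (a - b)) * Psi q hq0 hω 1 n (-b) (a-b)) := by
    obtain ⟨s, hs⟩ := h3
    rw [show zw q hω (a-b) * (zw q hω (-(1*(n:ℤ))) * zp q hq0 (-(b*(n:ℤ))) *
        Psi q hq0 hω 1 n (-b) (a-b)) =
        (zw q hω (a-b) * zw q hω (-(1*(n:ℤ)))) * (zp q hq0 (-(b*(n:ℤ))) *
        Psi q hq0 hω 1 n (-b) (a-b)) from by ring]
    rw [show zw q hω (-(2*(n:ℤ))) * zp q hq0 (-(b*(n:ℤ))) *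
        (zw q hω (-b - (a - b)) * Psi q hq0 hω 1 n (-b) (a-b)) =
        (zw q hω (-(2*(n:ℤ))) * zw q hω (-b - (a-b))) * (zp q hq0 (-(b*(n:ℤ))) *
        Psi q hq0 hω 1 n (-b) (a-b)) from by ring]
    congr 1
    rw [← zw_add, ← zw_add]
    apply zw_congr
    exact ⟨a + s, by linarith⟩
  rw [hcoef] at h
  have hu : zw q hω (-(2*(n:ℤ))) * zp q hq0 (-(b*(n:ℤ))) =
      (((wu q hω ^ (-(2*(n:ℤ))) * pu q hq0 ^ (-(b*(n:ℤ)))) : (Rg q)ˣ) : Rg q) := by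
    rw [Units.val_mul]
    rfl
  rw [hu] at h
  exact (Units.mul_right_inj _).mp h

lemma Br_step {q : K} (hq : Transcendental ℚ q) (hq0 : q ≠ 0) (hω : ω ^ 2 + ω + 1 = 0)
    {n : ℕ} {a b : ℤ}
    (h1 : Br q hq0 hω n (a-2) (b-2)) (h2 : Br q hq0 hω n (a-1) (b-3))
    (h3 : Br q hq0 hω n a (b-1)) :
    Br q hq0 hω (n+1) a b := by
  unfold Br at h1 h2 h3 ⊢
  rw [psi_rec hq hq0 hω 2 a b n, psi_rec hq hq0 hω 1 a b n, h1, h2, h3]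
  have e1 : zw q hω (a - 2 - (b - 2)) = zw q hω (a - b) := by
    apply zw_congr
    exact ⟨0, by ring⟩
  have e2 : zw q hω 2 * zw q hω (a - 1 - (b - 3)) = zw q hω (a - b) * zw q hω 1 := by
    rw [← zw_add, ← zw_add]
    apply zw_congr
    exact ⟨1, by ring⟩
  have e3 : zw q hω (2*2) * zw q hω (a - (b - 1)) = zw q hω (a - b) * zw q hω (2*1) := by
    rw [← zw_add, ← zw_add]
    apply zw_congr
    exact ⟨1, by ring⟩
  rw [e1]
  linear_combination (zp q hq0 (-a) * Psi q hq0 hω 1 n (a-1) (b-3)) * e2 +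
    (zp q hq0 (-b) * Psi q hq0 hω 1 n a (b-1)) * e3

lemma Br_main {q : K} (hq : Transcendental ℚ q) (hq0 : q ≠ 0) (hω : ω ^ 2 + ω + 1 = 0)
    {m : ℕ} (hm : m ≠ 0) : Br q hq0 hω (3*m) 1 2 := by
  obtain ⟨n', hn⟩ : ∃ n', 3*m = n' + 1 := ⟨3*m - 1, by omega⟩
  have C11 : Br q hq0 hω n' 1 1 := Br_diag q hq0 hω n' 1
  have CA : Br q hq0 hω n' (-1) 0 := by
    have h := Br_rot q hq0 hω (a := 1) (b := 1) ⟨m - 1, by push_cast; omega⟩ C11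
    rw [show (1:ℤ) - 1 = 0 from by ring] at h
    exact h
  have CB : Br q hq0 hω n' 0 (-1) := by
    have h := Br_rot q hq0 hω (a := -1) (b := 0) ⟨m, by push_cast; omega⟩ CA
    rw [show -(0:ℤ) = 0 from by ring, show (-1:ℤ) - 0 = -1 from by ring] at h
    exact h
  rw [hn]
  refine Br_step hq hq0 hω ?_ ?_ ?_
  · rw [show (1:ℤ) - 2 = -1 from by ring, show (2:ℤ) - 2 = 0 from by ring]
    exact CA
  · rw [show (1:ℤ) - 1 = 0 from by ring, show (2:ℤ) - 3 = -1 from by ring]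
    exact CB
  · rw [show (2:ℤ) - 1 = 1 from by ring]
    exact C11

/-! ### class decomposition and endgame -/

noncomputable def Wc (n : ℕ) (r : ℕ) : Rg q :=
  ∑ j ∈ (Tset n).filter (fun j => (j.2.1 + 2 * j.2.2) % 3 = r),
    zp q hq0 (epc j - ((j.2.1:ℤ) + 2 * (j.2.2:ℤ))) * φR q (m3 q j.1 j.2.1 j.2.2)

lemma psi_class (t : ℤ) (n : ℕ) :
    Psi q hq0 hω t n 1 2 =
      Wc q hq0 n 0 + zw q hω t * Wc q hq0 n 1 + zw q hω (2*t) * Wc q hq0 n 2 := by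
  unfold Psi
  classical
  have hpart := Finset.sum_filter_add_sum_filter_not (Tset n)
    (fun j => (j.2.1 + 2 * j.2.2) % 3 = 0) (trm q hq0 hω t 1 2)
  have hpart2 := Finset.sum_filter_add_sum_filter_not
    ((Tset n).filter (fun j => ¬((j.2.1 + 2 * j.2.2) % 3 = 0)))
    (fun j => (j.2.1 + 2 * j.2.2) % 3 = 1) (trm q hq0 hω t 1 2)
  rw [Finset.filter_filter, Finset.filter_filter] at hpart2
  rw [Finset.filter_congr (fun j _ => by
        constructor
        · exact fun h => h.2
        · intro h
          exact ⟨by omega, h⟩ :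
        ∀ j ∈ Tset n, (¬((j.2.1 + 2 * j.2.2) % 3 = 0) ∧ (j.2.1 + 2 * j.2.2) % 3 = 1)
          ↔ ((j.2.1 + 2 * j.2.2) % 3 = 1))] at hpart2
  rw [Finset.filter_congr (fun j _ => by
        constructor
        · intro h
          omega
        · intro h
          omega :
        ∀ j ∈ Tset n, (¬((j.2.1 + 2 * j.2.2) % 3 = 0) ∧ ¬((j.2.1 + 2 * j.2.2) % 3 = 1))
          ↔ ((j.2.1 + 2 * j.2.2) % 3 = 2))] at hpart2
  rw [← hpart, ← hpart2]
  have hcl : ∀ r : ℕ, ∑ j ∈ (Tset n).filter (fun j => (j.2.1 + 2 * j.2.2) % 3 = r),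
      trm q hq0 hω t 1 2 j = zw q hω (t * (r:ℤ)) * Wc q hq0 n r := by
    intro r
    unfold Wc
    rw [Finset.mul_sum]
    refine Finset.sum_congr rfl fun j hj => ?_
    have hr : (j.2.1 + 2 * j.2.2) % 3 = r := (Finset.mem_filter.mp hj).2
    have hdvd : (3:ℤ) ∣ (((j.2.1:ℤ) + 2 * (j.2.2:ℤ)) - (r:ℤ)) := by omega
    obtain ⟨s, hs⟩ := hdvd
    unfold trm
    rw [show zw q hω (t * ((j.2.1:ℤ) + 2 * (j.2.2:ℤ))) = zw q hω (t * (r:ℤ)) from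
      zw_congr q hω ⟨t * s, by linear_combination t * hs⟩]
    rw [show epc j - 1 * (j.2.1:ℤ) - 2 * (j.2.2:ℤ) = epc j - ((j.2.1:ℤ) + 2 * (j.2.2:ℤ)) from
      by ring]
    ring
  rw [hcl 0, hcl 1, hcl 2]
  rw [show (t * ((0:ℕ):ℤ)) = 0 from by push_cast; ring, zw_zero, one_mul]
  rw [show (t * ((1:ℕ):ℤ)) = t from by push_cast; ring]
  rw [show (t * ((2:ℕ):ℤ)) = 2 * t from by push_cast; ring]
  ring

lemma phi_omega_sq (hω : ω ^ 2 + ω + 1 = 0) :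
    (φR q ω) * (φR q ω) + φR q ω + 1 = 0 := by
  have h : φR q (ω ^ 2 + ω + 1) = 0 := by rw [hω, map_zero]
  rw [map_add, map_add, map_pow, map_one] at h
  linear_combination h

lemma W0_eq_W1 {q : K} (hq : Transcendental ℚ q) (hq0 : q ≠ 0) (hω : ω ^ 2 + ω + 1 = 0)
    {n : ℕ} (hbr : Psi q hq0 hω 2 n 1 2 = zw q hω (1 - 2) * Psi q hq0 hω 1 n 1 2) :
    Wc q hq0 n 0 = Wc q hq0 n 1 := by
  rw [psi_class q hq0 hω 2 n, psi_class q hq0 hω 1 n] at hbr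
  set W0 := Wc q hq0 n 0
  set W1 := Wc q hq0 n 1
  set W2 := Wc q hq0 n 2
  have e4 : zw q hω (2*2) = zw q hω 1 := zw_congr q hω ⟨1, by ring⟩
  have em1 : zw q hω (1 - 2) = zw q hω 2 := zw_congr q hω ⟨-1, by ring⟩
  have e21 : zw q hω 2 * zw q hω 1 = 1 := by
    rw [← zw_add, show (2:ℤ) + 1 = 3 from by ring,
      show zw q hω 3 = zw q hω 0 from zw_congr q hω ⟨1, by ring⟩, zw_zero]
  have e22 : zw q hω 2 * zw q hω 2 = zw q hω 1 := by
    rw [← zw_add]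
    exact zw_congr q hω ⟨1, by ring⟩
  rw [e4, em1] at hbr
  have expand : zw q hω 2 * (W0 + zw q hω 1 * W1 + zw q hω (2*1) * W2)
      = zw q hω 2 * W0 + W1 + zw q hω 1 * W2 := by
    rw [show (2*1 : ℤ) = 2 from by ring, mul_add, mul_add, ← mul_assoc, ← mul_assoc, e21, e22]
    ring
  rw [expand] at hbr
  -- hbr : W0 + zw2 * W1 + zw1 * W2 = zw2 * W0 + W1 + zw1 * W2
  have hkey : (1 - zw q hω 2) * (W0 - W1) = 0 := by linear_combination hbr
  have hprod : (1 - zw q hω 1) * (1 - zw q hω 2) = 3 := by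
    have ha := phi_omega_sq q hω
    rw [zw_one, zw_two]
    linear_combination (φR q ω - 2) * ha
  have h3W : (3 : Rg q) * (W0 - W1) = 0 := by
    calc (3 : Rg q) * (W0 - W1) = (1 - zw q hω 1) * ((1 - zw q hω 2) * (W0 - W1)) := by
          rw [← mul_assoc, hprod]
      _ = 0 := by rw [hkey, mul_zero]
  have h3K : φR q ((3:K)⁻¹) * (3 : Rg q) = 1 := by
    rw [show (3 : Rg q) = φR q (3:K) from by rw [map_ofNat], ← map_mul,
      inv_mul_cancel₀ (by norm_num : (3:K) ≠ 0), map_one]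
  have hfin := congrArg (fun z => φR q ((3:K)⁻¹) * z) h3W
  simp only [mul_zero] at hfin
  rw [← mul_assoc, h3K, one_mul] at hfin
  exact sub_eq_zero.mp hfin

lemma two_mul_choose_two (j : ℕ) : (2:ℤ) * (j.choose 2 : ℤ) = (j:ℤ) * ((j:ℤ) - 1) := by
  induction j with
  | zero => norm_num
  | succ k ih =>
    rw [choose_two_succ]
    push_cast
    linear_combination ih

lemma aux_zmod : ∀ u v w : ZMod 3, u + v + w = 0 →
    ((v + 2*w = 2 → u*(u-1) + v*(v-1) + w*(w-1) - 2*(2*v + w) = 0) ∧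
     (¬(v + 2*w = 2) → u*(u-1) + v*(v-1) + w*(w-1) - 2*(v + 2*w) = 0)) := by decide

lemma div3 {m : ℕ} (j1 j2 j3 : ℕ) (hsum : j1 + j2 + j3 = 3*m) :
    (3:ℤ) ∣ ((j1.choose 2 : ℤ) + (j2.choose 2 : ℤ) + (j3.choose 2 : ℤ) -
      (if ((j2:ℤ) + 2*(j3:ℤ)) % 3 = 2 then 2*(j2:ℤ) + (j3:ℤ) else (j2:ℤ) + 2*(j3:ℤ))) := by
  have hcast : ∀ x : ℤ, ((x : ZMod 3) = 0) ↔ (3:ℤ) ∣ x := fun x => by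
    exact_mod_cast ZMod.intCast_zmod_eq_zero_iff_dvd x 3
  rw [← hcast]
  have h2z : ∀ x : ZMod 3, 2*x = 0 → x = 0 := by decide
  apply h2z
  have hsum3 : ((j1:ZMod 3) + (j2:ZMod 3) + (j3:ZMod 3)) = 0 := by
    have h := congrArg (fun x : ℕ => (x : ZMod 3)) hsum
    push_cast at h
    rw [h, show ((3:ZMod 3)) = 0 from rfl, zero_mul]
  have hch : ∀ j : ℕ, (2:ZMod 3) * ((j.choose 2 : ℕ) : ZMod 3)
      = (j : ZMod 3) * ((j : ZMod 3) - 1) := fun j => by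
    have h := congrArg (fun x : ℤ => (x : ZMod 3)) (two_mul_choose_two j)
    push_cast at h
    exact h
  obtain ⟨haux1, haux2⟩ := aux_zmod (j1 : ZMod 3) (j2 : ZMod 3) (j3 : ZMod 3) hsum3
  by_cases hc : ((j2:ℤ) + 2*(j3:ℤ)) % 3 = 2
  · rw [if_pos hc]
    have hv : (j2 : ZMod 3) + 2*(j3 : ZMod 3) = 2 := by
      have hd : (3:ℤ) ∣ ((j2:ℤ) + 2*(j3:ℤ) - 2) := by omega
      have h := (hcast _).mpr hd
      push_cast at h
      linear_combination h
    have h := haux1 hv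
    push_cast
    linear_combination hch j1 + hch j2 + hch j3 + h
  · rw [if_neg hc]
    have hv : ¬((j2 : ZMod 3) + 2*(j3 : ZMod 3) = 2) := by
      intro hcon
      apply hc
      have h0 : ((((j2:ℤ) + 2*(j3:ℤ) - 2) : ℤ) : ZMod 3) = 0 := by
        push_cast
        linear_combination hcon
      have hd := (hcast _).mp h0
      omega
    have h := haux2 hv
    push_cast
    linear_combination hch j1 + hch j2 + hch j3 + h

end Stmt7Aux

theorem stmt_7 {K : Type*} [Field K] [CharZero K] (q ω : K)
    (hq : Transcendental ℚ q) (hω : ω ^ 2 + ω + 1 = 0) (m : ℕ) :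
    ∑ j ∈ (Finset.range (3 * m + 1) ×ˢ Finset.range (3 * m + 1) ×ˢ
        Finset.range (3 * m + 1)).filter (fun j => j.1 + j.2.1 + j.2.2 = 3 * m),
      q ^ (((j.1.choose 2 : ℤ) + (j.2.1.choose 2 : ℤ) + (j.2.2.choose 2 : ℤ) -
            (if ((j.2.1 : ℤ) + 2 * j.2.2) % 3 = 2 then 2 * (j.2.1 : ℤ) + j.2.2
             else (j.2.1 : ℤ) + 2 * j.2.2)) / 3) *
        qmul3 q (3 * m) j.1 j.2.1 j.2.2 * ω ^ (j.2.1 + 2 * j.2.2) =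
      (if m = 0 then 1 else 0) := by
  classical
  by_cases hm : m = 0
  · subst hm
    rw [if_pos rfl]
    have hT : ((Finset.range (3 * 0 + 1) ×ˢ Finset.range (3 * 0 + 1) ×ˢ
        Finset.range (3 * 0 + 1)).filter (fun j => j.1 + j.2.1 + j.2.2 = 3 * 0))
        = {((0,0,0) : ℕ × ℕ × ℕ)} := by decide
    rw [hT, Finset.sum_singleton]
    norm_num [qmul3, qPoch]
  · rw [if_neg hm]
    have hq0 : q ≠ 0 := Stmt7Aux.q_ne_zero hq
    apply Stmt7Aux.phiR_inj q
    rw [map_zero, map_sum]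
    have hset : ((Finset.range (3*m+1) ×ˢ Finset.range (3*m+1) ×ˢ
        Finset.range (3*m+1)).filter (fun j => j.1 + j.2.1 + j.2.2 = 3*m))
        = Stmt7Aux.Tset (3*m) := rfl
    rw [hset]
    have hterm : ∀ j ∈ Stmt7Aux.Tset (3*m),
        Stmt7Aux.φR q (q ^ (((j.1.choose 2 : ℤ) + (j.2.1.choose 2 : ℤ) + (j.2.2.choose 2 : ℤ) -
            (if ((j.2.1 : ℤ) + 2 * j.2.2) % 3 = 2 then 2 * (j.2.1 : ℤ) + j.2.2
             else (j.2.1 : ℤ) + 2 * j.2.2)) / 3) *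
          qmul3 q (3 * m) j.1 j.2.1 j.2.2 * ω ^ (j.2.1 + 2 * j.2.2)) =
        Stmt7Aux.zw q hω ((j.2.1:ℤ) + 2 * (j.2.2:ℤ)) *
          (Stmt7Aux.zp q hq0 (Stmt7Aux.epc j -
            (if ((j.2.1 : ℤ) + 2 * j.2.2) % 3 = 2 then 2 * (j.2.1 : ℤ) + j.2.2
             else (j.2.1 : ℤ) + 2 * j.2.2)) *
           Stmt7Aux.φR q (Stmt7Aux.m3 q j.1 j.2.1 j.2.2)) := by
      intro j hj
      have hsum := Stmt7Aux.mem_Tset.mp hj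
      obtain ⟨j1, j2, j3⟩ := j
      dsimp only at hsum ⊢
      rw [map_mul, map_mul]
      have hdvd := Stmt7Aux.div3 j1 j2 j3 hsum
      rw [Stmt7Aux.phi_q_zpow q hq0 (Int.mul_ediv_cancel' hdvd)]
      rw [Stmt7Aux.phi_omega_pow q hω]
      rw [show qmul3 q (3*m) j1 j2 j3 = Stmt7Aux.m3 q j1 j2 j3 from by
        unfold Stmt7Aux.m3
        rw [hsum]]
      rw [show ((j2 + 2*j3 : ℕ) : ℤ) = (j2:ℤ) + 2*(j3:ℤ) from by push_cast; ring]
      unfold Stmt7Aux.epc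
      dsimp only
      ring
    rw [Finset.sum_congr rfl hterm]
    rw [← Finset.sum_filter_add_sum_filter_not (Stmt7Aux.Tset (3*m))
      (fun j => ((j.2.1 : ℤ) + 2 * j.2.2) % 3 = 2)]
    have hA : ∑ j ∈ (Stmt7Aux.Tset (3*m)).filter
        (fun j => ((j.2.1 : ℤ) + 2 * j.2.2) % 3 = 2),
        Stmt7Aux.zw q hω ((j.2.1:ℤ) + 2 * (j.2.2:ℤ)) *
          (Stmt7Aux.zp q hq0 (Stmt7Aux.epc j -
            (if ((j.2.1 : ℤ) + 2 * j.2.2) % 3 = 2 then 2 * (j.2.1 : ℤ) + j.2.2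
             else (j.2.1 : ℤ) + 2 * j.2.2)) *
           Stmt7Aux.φR q (Stmt7Aux.m3 q j.1 j.2.1 j.2.2)) =
        Stmt7Aux.zw q hω 2 * Stmt7Aux.Wc q hq0 (3*m) 1 := by
      unfold Stmt7Aux.Wc
      rw [Finset.mul_sum]
      refine Finset.sum_nbij' (fun j => (j.1, j.2.2, j.2.1)) (fun j => (j.1, j.2.2, j.2.1))
        ?_ ?_ ?_ ?_ ?_
      · intro x hx
        obtain ⟨x1, x2, x3⟩ := x
        simp only [Finset.mem_filter, Stmt7Aux.mem_Tset] at hx ⊢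
        omega
      · intro x hx
        obtain ⟨x1, x2, x3⟩ := x
        simp only [Finset.mem_filter, Stmt7Aux.mem_Tset] at hx ⊢
        omega
      · intro x _
        rfl
      · intro x _
        rfl
      · intro x hx
        obtain ⟨x1, x2, x3⟩ := x
        simp only [Finset.mem_filter, Stmt7Aux.mem_Tset] at hx
        obtain ⟨hmem, hc⟩ := hx
        dsimp only
        rw [if_pos hc]
        rw [show Stmt7Aux.zw q hω ((x2:ℤ) + 2*(x3:ℤ)) = Stmt7Aux.zw q hω 2 from
          Stmt7Aux.zw_congr q hω (by omega)]
        congr 1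
        rw [show Stmt7Aux.epc (x1, x2, x3) - (2*(x2:ℤ) + (x3:ℤ))
            = Stmt7Aux.epc (x1, x3, x2) - ((x3:ℤ) + 2*(x2:ℤ)) from by
          unfold Stmt7Aux.epc
          dsimp only
          ring]
        rw [Stmt7Aux.m3_swap23]
    have hB : ∑ j ∈ (Stmt7Aux.Tset (3*m)).filter
        (fun j => ¬(((j.2.1 : ℤ) + 2 * j.2.2) % 3 = 2)),
        Stmt7Aux.zw q hω ((j.2.1:ℤ) + 2 * (j.2.2:ℤ)) *
          (Stmt7Aux.zp q hq0 (Stmt7Aux.epc j -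
            (if ((j.2.1 : ℤ) + 2 * j.2.2) % 3 = 2 then 2 * (j.2.1 : ℤ) + j.2.2
             else (j.2.1 : ℤ) + 2 * j.2.2)) *
           Stmt7Aux.φR q (Stmt7Aux.m3 q j.1 j.2.1 j.2.2)) =
        Stmt7Aux.Wc q hq0 (3*m) 0 + Stmt7Aux.zw q hω 1 * Stmt7Aux.Wc q hq0 (3*m) 1 := by
      have hpart := Finset.sum_filter_add_sum_filter_not
        ((Stmt7Aux.Tset (3*m)).filter (fun j => ¬(((j.2.1 : ℤ) + 2 * j.2.2) % 3 = 2)))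
        (fun j => (j.2.1 + 2 * j.2.2) % 3 = 0)
        (fun j => Stmt7Aux.zw q hω ((j.2.1:ℤ) + 2 * (j.2.2:ℤ)) *
          (Stmt7Aux.zp q hq0 (Stmt7Aux.epc j -
            (if ((j.2.1 : ℤ) + 2 * j.2.2) % 3 = 2 then 2 * (j.2.1 : ℤ) + j.2.2
             else (j.2.1 : ℤ) + 2 * j.2.2)) *
           Stmt7Aux.φR q (Stmt7Aux.m3 q j.1 j.2.1 j.2.2)))
      rw [Finset.filter_filter, Finset.filter_filter] at hpart
      have hcong1 : ((Stmt7Aux.Tset (3*m)).filter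
          (fun j => ¬(((j.2.1 : ℤ) + 2 * j.2.2) % 3 = 2) ∧ (j.2.1 + 2 * j.2.2) % 3 = 0))
          = (Stmt7Aux.Tset (3*m)).filter (fun j => (j.2.1 + 2 * j.2.2) % 3 = 0) := by
        refine Finset.filter_congr fun j _ => ?_
        constructor
        · exact fun h => h.2
        · intro h
          exact ⟨by omega, h⟩
      have hcong2 : ((Stmt7Aux.Tset (3*m)).filter
          (fun j => ¬(((j.2.1 : ℤ) + 2 * j.2.2) % 3 = 2) ∧ ¬((j.2.1 + 2 * j.2.2) % 3 = 0)))
          = (Stmt7Aux.Tset (3*m)).filter (fun j => (j.2.1 + 2 * j.2.2) % 3 = 1) := by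
        refine Finset.filter_congr fun j _ => ?_
        constructor
        · intro h
          omega
        · intro h
          refine ⟨by omega, by omega⟩
      rw [hcong1, hcong2] at hpart
      rw [← hpart]
      congr 1
      · unfold Stmt7Aux.Wc
        refine Finset.sum_congr rfl fun j hj => ?_
        have hr : (j.2.1 + 2 * j.2.2) % 3 = 0 := (Finset.mem_filter.mp hj).2
        rw [if_neg (by omega)]
        rw [show Stmt7Aux.zw q hω ((j.2.1:ℤ) + 2*(j.2.2:ℤ)) = Stmt7Aux.zw q hω 0 from
          Stmt7Aux.zw_congr q hω (by omega)]
        rw [Stmt7Aux.zw_zero, one_mul]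
      · unfold Stmt7Aux.Wc
        rw [Finset.mul_sum]
        refine Finset.sum_congr rfl fun j hj => ?_
        have hr : (j.2.1 + 2 * j.2.2) % 3 = 1 := (Finset.mem_filter.mp hj).2
        rw [if_neg (by omega)]
        rw [show Stmt7Aux.zw q hω ((j.2.1:ℤ) + 2*(j.2.2:ℤ)) = Stmt7Aux.zw q hω 1 from
          Stmt7Aux.zw_congr q hω (by omega)]
    rw [hA, hB]
    have hbr := Stmt7Aux.Br_main hq hq0 hω hm
    unfold Stmt7Aux.Br at hbr
    have hW := Stmt7Aux.W0_eq_W1 hq hq0 hω hbr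
    rw [hW]
    have hzsum : Stmt7Aux.zw q hω 2 + Stmt7Aux.zw q hω 1 + 1 = 0 := by
      rw [Stmt7Aux.zw_one, Stmt7Aux.zw_two]
      linear_combination Stmt7Aux.phi_omega_sq q hω
    linear_combination Stmt7Aux.Wc q hq0 (3*m) 1 * hzsum
end

section
/- Let omega satisfy 1 + omega + omega^2 = 0 and let S_1(n), S_2(n), S_3(n) be as follows: S_1(n) = sum_{k in Z} q^{3k^2-k-3kn} [n choose 3k-n]_q, S_2(n) = q^{-n} sum_{k in Z} q^{3k^2+k-3kn} [n choose 3k+1-n]_q, S_3(n) = sum_{k in Z} q^{3k^2-k-3kn} [n choose 3k-1-n]_q. Then S_1(n) + omega*S_2(n) + omega^2*S_3(n) = (-1)^n q^{-C(n+1,2)} for all nonnegative integers n. -/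
section Aux

variable {K : Type*} [Field K] (q : K)

lemma qbinom_eq_zero_of_neg (n : ℕ) : ∀ r : ℤ, r < 0 → qbinom q n r = 0 := by
  induction n with
  | zero => intro r h; simp only [qbinom]; rw [if_neg (by omega)]
  | succ n ih =>
      intro r h
      simp only [qbinom]
      rw [ih r h, ih (r - 1) (by omega)]
      ring

lemma qbinom_eq_zero_of_gt (n : ℕ) : ∀ r : ℤ, (n : ℤ) < r → qbinom q n r = 0 := by
  induction n with
  | zero => intro r h; simp only [qbinom]; rw [if_neg (by omega)]
  | succ n ih =>
      intro r h
      push_cast at h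
      simp only [qbinom]
      rw [ih r (by omega), ih (r - 1) (by omega)]
      ring

lemma qbinom_succ (n : ℕ) (r : ℤ) :
    qbinom q (n + 1) r = q ^ r * qbinom q n r + qbinom q n (r - 1) := by
  rcases lt_or_ge r 0 with h | h
  · rw [qbinom_eq_zero_of_neg q (n + 1) r h, qbinom_eq_zero_of_neg q n r h,
      qbinom_eq_zero_of_neg q n (r - 1) (by omega)]
    ring
  · show q ^ r.toNat * qbinom q n r + qbinom q n (r - 1) = _
    rw [show (q : K) ^ r = q ^ r.toNat by rw [← zpow_natCast, Int.toNat_of_nonneg h]]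

lemma zpow_succ' (hq : q ≠ 0) (a b : ℤ) (h : a = 1 + b) : q ^ a = q * q ^ b := by
  rw [h, zpow_add₀ hq, zpow_one]

lemma qbinom_absorb (hq : q ≠ 0) (n : ℕ) : ∀ r : ℤ,
    (q ^ r - 1) * qbinom q n r = (q ^ ((n : ℤ) + 1 - r) - 1) * qbinom q n (r - 1) := by
  induction n with
  | zero =>
      intro r
      rcases eq_or_ne r 0 with rfl | h0
      · simp [qbinom]
      rcases eq_or_ne r 1 with rfl | h1
      · simp [qbinom]
      · simp only [qbinom]
        rw [if_neg h0, if_neg (by omega : r - 1 ≠ 0)]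
        ring
  | succ n ih =>
      intro r
      have h1 := ih r
      have h2 := ih (r - 1)
      push_cast
      rw [qbinom_succ, qbinom_succ,
        zpow_succ' q hq r (r - 1) (by ring),
        zpow_succ' q hq ((n : ℤ) + 1 + 1 - r) ((n : ℤ) + 1 - r) (by ring)]
      rw [zpow_succ' q hq r (r - 1) (by ring)] at h1
      rw [show ((n : ℤ) + 1 - (r - 1)) = (n : ℤ) + 1 + 1 - r from by ring,
        zpow_succ' q hq ((n : ℤ) + 1 + 1 - r) ((n : ℤ) + 1 - r) (by ring)] at h2
      linear_combination (q * q ^ (r - 1)) * h1 + h2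

lemma qbinom_symm (hq : q ≠ 0) (n : ℕ) : ∀ r : ℤ, qbinom q n r = qbinom q n ((n : ℤ) - r) := by
  induction n with
  | zero =>
      intro r
      simp only [qbinom, Nat.cast_zero, zero_sub]
      by_cases h : r = 0
      · simp [h]
      · rw [if_neg h, if_neg (by omega)]
  | succ n ih =>
      intro r
      push_cast
      rw [qbinom_succ, qbinom_succ, ih ((n : ℤ) + 1 - r),
        show ((n : ℤ) - ((n : ℤ) + 1 - r)) = r - 1 from by ring,
        show ((n : ℤ) + 1 - r - 1) = (n : ℤ) - r from by ring, ← ih r]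
      linear_combination qbinom_absorb q hq n r

lemma qbinom_succ' (hq : q ≠ 0) (n : ℕ) (r : ℤ) :
    qbinom q (n + 1) r = qbinom q n r + q ^ ((n : ℤ) + 1 - r) * qbinom q n (r - 1) := by
  rw [qbinom_symm q hq (n + 1) r, qbinom_succ]
  push_cast
  rw [qbinom_symm q hq n ((n : ℤ) + 1 - r),
    show ((n : ℤ) - ((n : ℤ) + 1 - r)) = r - 1 from by ring,
    show ((n : ℤ) + 1 - r - 1) = (n : ℤ) - r from by ring, ← qbinom_symm q hq n r]
  ring

lemma supp_fin (n : ℕ) (f : ℤ → K) (b : ℤ)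
    (hf : ∀ k : ℤ, qbinom q n (3 * k + b) = 0 → f k = 0) :
    (Function.support f).Finite := by
  apply Set.Finite.subset (Set.finite_Icc (-(b.natAbs : ℤ) - n) ((b.natAbs : ℤ) + n))
  intro k hk
  have h : qbinom q n (3 * k + b) ≠ 0 := fun h0 => hk (hf k h0)
  have h1 : ¬ (3 * k + b < 0) := fun hc => h (qbinom_eq_zero_of_neg q n _ hc)
  have h2 : ¬ ((n : ℤ) < 3 * k + b) := fun hc => h (qbinom_eq_zero_of_gt q n _ hc)
  simp only [Set.mem_Icc]
  omega

lemma zpow_shuffle (hq : q ≠ 0) {a b c d : ℤ} (h : a + b = c + d) (X : K) :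
    q ^ a * (q ^ b * X) = q ^ c * (q ^ d * X) := by
  rw [← mul_assoc, ← mul_assoc, ← zpow_add₀ hq, ← zpow_add₀ hq, h]

lemma zpow_shuffle2 (hq : q ≠ 0) {a b c : ℤ} (h : a + b = c) (X : K) :
    q ^ a * (q ^ b * X) = q ^ c * X := by
  rw [← mul_assoc, ← zpow_add₀ hq, h]

lemma key_lemma (hq : q ≠ 0) (n : ℕ) :
    (∑ᶠ k : ℤ, q ^ (3 * k ^ 2 - k - 3 * k * n) * qbinom q n (3 * k - n)) -
      (∑ᶠ k : ℤ, q ^ (3 * k ^ 2 - k - 3 * k * n) * qbinom q n (3 * k - 1 - n)) =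
      (-1 : K) ^ n * q ^ (-((n + 1).choose 2 : ℤ)) := by
  induction n with
  | zero =>
      have e1 : (∑ᶠ k : ℤ, q ^ (3 * k ^ 2 - k - 3 * k * (0:ℕ)) * qbinom q 0 (3 * k - (0:ℕ))) = 1 := by
        rw [finsum_eq_single _ (0 : ℤ)]
        · norm_num [qbinom]
        · intro k hk
          rw [show qbinom q 0 (3 * k - ((0:ℕ):ℤ)) = 0 from by
            simp only [qbinom, Nat.cast_zero, sub_zero]; rw [if_neg (by omega)], mul_zero]
      have e2 : (∑ᶠ k : ℤ, q ^ (3 * k ^ 2 - k - 3 * k * (0:ℕ)) * qbinom q 0 (3 * k - 1 - (0:ℕ))) = 0 := by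
        rw [finsum_congr (g := fun _ : ℤ => (0:K)) ?_, finsum_zero]
        intro k
        rw [show qbinom q 0 (3 * k - 1 - ((0:ℕ):ℤ)) = 0 from by
          simp only [qbinom, Nat.cast_zero, sub_zero]; rw [if_neg (by omega)], mul_zero]
      rw [e1, e2]
      norm_num
  | succ n ih =>
      push_cast
      have hA : (∑ᶠ k : ℤ, q ^ (3 * k ^ 2 - k - 3 * k * ((n:ℤ) + 1)) * qbinom q (n + 1) (3 * k - ((n:ℤ) + 1)))
          = q ^ (-((n:ℤ) + 1)) * (∑ᶠ k : ℤ, q ^ (3 * k ^ 2 - k - 3 * k * (n:ℤ)) * qbinom q n (3 * k - 1 - (n:ℤ)))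
            + ∑ᶠ k : ℤ, q ^ (3 * k ^ 2 - k - 3 * k * ((n:ℤ) + 1)) * qbinom q n (3 * k - (n:ℤ) - 2) := by
        rw [mul_finsum' _ _ (supp_fin q n _ (-1 - (n:ℤ)) ?h1), ← finsum_add_distrib ?h2 ?h3]
        case h1 =>
          intro k h0
          rw [show (3 * k - 1 - (n:ℤ)) = 3 * k + (-1 - (n:ℤ)) from by ring, h0, mul_zero]
        case h2 =>
          apply supp_fin q n _ (-1 - (n:ℤ))
          intro k h0
          rw [show (3 * k - 1 - (n:ℤ)) = 3 * k + (-1 - (n:ℤ)) from by ring, h0, mul_zero, mul_zero]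
        case h3 =>
          apply supp_fin q n _ (-(n:ℤ) - 2)
          intro k h0
          rw [show (3 * k - (n:ℤ) - 2) = 3 * k + (-(n:ℤ) - 2) from by ring, h0, mul_zero]
        apply finsum_congr
        intro k
        rw [show (3 * k - ((n:ℤ) + 1)) = 3 * k - 1 - (n:ℤ) from by ring, qbinom_succ,
          show (3 * k - 1 - (n:ℤ) - 1) = 3 * k - (n:ℤ) - 2 from by ring, mul_add]
        congr 1
        exact zpow_shuffle q hq (by ring) _
      have hB : (∑ᶠ k : ℤ, q ^ (3 * k ^ 2 - k - 3 * k * ((n:ℤ) + 1)) * qbinom q (n + 1) (3 * k - 1 - ((n:ℤ) + 1)))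
          = (∑ᶠ k : ℤ, q ^ (3 * k ^ 2 - k - 3 * k * ((n:ℤ) + 1)) * qbinom q n (3 * k - (n:ℤ) - 2))
            + q ^ (-((n:ℤ) + 1)) * ∑ᶠ k : ℤ, q ^ (3 * k ^ 2 - k - 3 * k * (n:ℤ)) * qbinom q n (3 * k - (n:ℤ)) := by
        have hstep : (fun k : ℤ => q ^ (3 * k ^ 2 - k - 3 * k * ((n:ℤ) + 1)) * qbinom q (n + 1) (3 * k - 1 - ((n:ℤ) + 1)))
            = fun k : ℤ => q ^ (3 * k ^ 2 - k - 3 * k * ((n:ℤ) + 1)) * qbinom q n (3 * k - (n:ℤ) - 2)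
              + (fun j : ℤ => q ^ (-((n:ℤ) + 1)) * (q ^ (3 * j ^ 2 - j - 3 * j * (n:ℤ)) * qbinom q n (3 * j - (n:ℤ)))) (k - 1) := by
          funext k
          simp only []
          rw [show (3 * k - 1 - ((n:ℤ) + 1)) = 3 * k - (n:ℤ) - 2 from by ring, qbinom_succ' q hq,
            show (3 * k - (n:ℤ) - 2 - 1) = 3 * (k - 1) - (n:ℤ) from by ring, mul_add]
          congr 1
          rw [show ((n:ℤ) + 1 - (3 * k - (n:ℤ) - 2)) = 2 * (n:ℤ) + 3 - 3 * k from by ring]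
          exact zpow_shuffle q hq (by ring) _
        rw [hstep, finsum_add_distrib ?h2 ?h3]
        case h2 =>
          apply supp_fin q n _ (-(n:ℤ) - 2)
          intro k h0
          rw [show (3 * k - (n:ℤ) - 2) = 3 * k + (-(n:ℤ) - 2) from by ring, h0, mul_zero]
        case h3 =>
          apply supp_fin q n _ (-3 - (n:ℤ))
          intro k h0
          simp only []
          rw [show (3 * (k - 1) - (n:ℤ)) = 3 * k + (-3 - (n:ℤ)) from by ring, h0, mul_zero, mul_zero]
        congr 1
        refine Eq.trans (finsum_comp
          (g := fun j : ℤ => q ^ (-((n:ℤ) + 1)) * (q ^ (3 * j ^ 2 - j - 3 * j * (n:ℤ)) * qbinom q n (3 * j - (n:ℤ))))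
          (fun k : ℤ => k - 1) (Equiv.subRight (1:ℤ)).bijective) ?_
        rw [mul_finsum' _ _ (supp_fin q n _ (-(n:ℤ)) ?h4)]
        case h4 =>
          intro k h0
          rw [show (3 * k - (n:ℤ)) = 3 * k + (-(n:ℤ)) from by ring, h0, mul_zero]
      rw [hA, hB]
      have hc : ((n + 1 + 1).choose 2 : ℤ) = ((n + 1).choose 2 : ℤ) + ((n:ℤ) + 1) := by
        rw [Nat.choose_succ_succ (n + 1) 1]
        push_cast [Nat.choose_one_right]
        ring
      have hz : (q : K) ^ (-((n + 1 + 1).choose 2 : ℤ)) = q ^ (-((n:ℤ) + 1)) * q ^ (-((n + 1).choose 2 : ℤ)) := by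
        rw [← zpow_add₀ hq]
        congr 1
        rw [hc]; ring
      rw [hz]
      linear_combination (-(q ^ (-((n:ℤ) + 1)))) * ih

lemma sum_two_eq_three (hq : q ≠ 0) (n : ℕ) :
    q ^ (-(n : ℤ)) * (∑ᶠ k : ℤ, q ^ (3 * k ^ 2 + k - 3 * k * n) * qbinom q n (3 * k + 1 - n))
      = ∑ᶠ k : ℤ, q ^ (3 * k ^ 2 - k - 3 * k * n) * qbinom q n (3 * k - 1 - n) := by
  rw [mul_finsum' _ _ (supp_fin q n _ (1 - (n:ℤ)) ?h1)]
  case h1 =>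
    intro k h0
    rw [show (3 * k + 1 - (n:ℤ)) = 3 * k + (1 - (n:ℤ)) from by ring, h0, mul_zero]
  refine Eq.trans (finsum_comp
    (g := fun j : ℤ => q ^ (-(n : ℤ)) * (q ^ (3 * j ^ 2 + j - 3 * j * (n:ℤ)) * qbinom q n (3 * j + 1 - (n:ℤ))))
    (fun k : ℤ => (n : ℤ) - k) (Equiv.subLeft (n : ℤ)).bijective).symm ?_
  apply finsum_congr
  intro k
  rw [qbinom_symm q hq n (3 * ((n:ℤ) - k) + 1 - (n:ℤ)),
    show ((n:ℤ) - (3 * ((n:ℤ) - k) + 1 - (n:ℤ))) = 3 * k - 1 - (n:ℤ) from by ring]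
  exact zpow_shuffle2 q hq (by ring) _

end Aux

theorem stmt_15 {K : Type*} [Field K] (q ω : K) (hq : q ≠ 0)
    (hω : 1 + ω + ω ^ 2 = 0) (n : ℕ) :
    (∑ᶠ k : ℤ, q ^ (3 * k ^ 2 - k - 3 * k * n) * qbinom q n (3 * k - n)) +
      ω * (q ^ (-(n : ℤ)) *
        ∑ᶠ k : ℤ, q ^ (3 * k ^ 2 + k - 3 * k * n) * qbinom q n (3 * k + 1 - n)) +
      ω ^ 2 *
        (∑ᶠ k : ℤ, q ^ (3 * k ^ 2 - k - 3 * k * n) * qbinom q n (3 * k - 1 - n)) =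
      (-1 : K) ^ n * q ^ (-((n + 1).choose 2 : ℤ)) := by
  rw [sum_two_eq_three q hq n]
  linear_combination key_lemma q hq n +
    (∑ᶠ k : ℤ, q ^ (3 * k ^ 2 - k - 3 * k * (n:ℤ)) * qbinom q n (3 * k - 1 - (n:ℤ))) * hω
end
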